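/- Fix positive integers n, m, real n×n matrices A and L with L symmetric, a real n×m matrix B, reals q and r with r > 0, and a function x̄ : ℝ → ℝⁿ. Let Γ : ℝ → (n×n real matrices), β : ℝ → ℝⁿ, δ : ℝ → ℝ be differentiable with Γ(t) symmetric for all t and satisfying, for all t: Γ'(t) = (1/r)·Γ(t) B Bᵀ Γ(t) − Γ(t) A − Aᵀ Γ(t) − q·I, β'(t) = ((1/r)·Γ(t) B Bᵀ − Aᵀ) β(t) − q·L x̄(t), and δ'(t) = (1/(2r))·⟪β(t), B Bᵀ β(t)⟫. Let u : ℝ → ℝᵐ and let x : ℝ → ℝⁿ be differentiable with x'(t) = A x(t) + B u(t) for all t. Then for every t, the function V(t) = ½⟪x(t), Γ(t) x(t)⟫ + ⟪β(t), x(t)⟫ + δ(t) is differentiable with V'(t) = −(q/2)‖x(t)‖² − q⟪x̄(t), L x(t)⟫ − (r/2)‖u(t)‖² + (r/2)‖u(t) + (1/r)·Bᵀ(Γ(t) x(t) + β(t))‖². -/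

import Mathlib

open scoped RealInnerProductSpace Matrix
attribute [local instance] Matrix.normedAddCommGroup Matrix.normedSpace

lemma mulE {n m k : ℕ} (M : Matrix (Fin n) (Fin m) ℝ) (N : Matrix (Fin m) (Fin k) ℝ)
    (v : EuclideanSpace ℝ (Fin k)) :
    Matrix.toEuclideanLin (M * N) v = Matrix.toEuclideanLin M (Matrix.toEuclideanLin N v) := by
  simp [Matrix.toEuclideanLin_apply, Matrix.mulVec_mulVec]

lemma oneE {n : ℕ} (v : EuclideanSpace ℝ (Fin n)) :
    Matrix.toEuclideanLin (1 : Matrix (Fin n) (Fin n) ℝ) v = v := by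
  simp [Matrix.toEuclideanLin_apply]

lemma adjE {n m : ℕ} (M : Matrix (Fin n) (Fin m) ℝ) (a : EuclideanSpace ℝ (Fin n))
    (c : EuclideanSpace ℝ (Fin m)) :
    ⟪Matrix.toEuclideanLin Mᵀ a, c⟫ = ⟪a, Matrix.toEuclideanLin M c⟫ := by
  have h : Mᵀ = Mᴴ := by ext i j; simp [Matrix.conjTranspose_apply]
  rw [h, Matrix.toEuclideanLin_conjTranspose_eq_adjoint, LinearMap.adjoint_inner_left]

noncomputable def matCLM (n m : ℕ) : Matrix (Fin n) (Fin m) ℝ →L[ℝ]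
    (EuclideanSpace ℝ (Fin m) →L[ℝ] EuclideanSpace ℝ (Fin n)) :=
  LinearMap.toContinuousLinearMap
    ((LinearMap.toContinuousLinearMap :
        (EuclideanSpace ℝ (Fin m) →ₗ[ℝ] EuclideanSpace ℝ (Fin n)) ≃ₗ[ℝ] _).toLinearMap.comp
      (Matrix.toEuclideanLin :
        Matrix (Fin n) (Fin m) ℝ ≃ₗ[ℝ] _).toLinearMap)

lemma matCLM_apply {n m : ℕ} (M : Matrix (Fin n) (Fin m) ℝ) (v : EuclideanSpace ℝ (Fin m)) :
    matCLM n m M v = Matrix.toEuclideanLin M v := rfl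

theorem value_function_derivative_identity (n m : ℕ) (hn : 0 < n) (hm : 0 < m)
    (A L : Matrix (Fin n) (Fin n) ℝ) (hL : L.IsSymm)
    (B : Matrix (Fin n) (Fin m) ℝ) (q r : ℝ) (hr : 0 < r)
    (xbar : ℝ → EuclideanSpace ℝ (Fin n))
    (Γ : ℝ → Matrix (Fin n) (Fin n) ℝ) (β : ℝ → EuclideanSpace ℝ (Fin n)) (δ : ℝ → ℝ)
    (hΓs : ∀ t : ℝ, (Γ t).IsSymm)
    (hΓ : ∀ t : ℝ, HasDerivAt Γ
      ((1 / r) • (Γ t * B * Bᵀ * Γ t) - Γ t * A - Aᵀ * Γ t -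
        q • (1 : Matrix (Fin n) (Fin n) ℝ)) t)
    (hβ : ∀ t : ℝ, HasDerivAt β
      (Matrix.toEuclideanLin ((1 / r) • (Γ t * B * Bᵀ) - Aᵀ) (β t) -
        q • Matrix.toEuclideanLin L (xbar t)) t)
    (hδ : ∀ t : ℝ, HasDerivAt δ
      ((1 / (2 * r)) * ⟪β t, Matrix.toEuclideanLin (B * Bᵀ) (β t)⟫) t)
    (u : ℝ → EuclideanSpace ℝ (Fin m)) (x : ℝ → EuclideanSpace ℝ (Fin n))
    (hx : ∀ t : ℝ, HasDerivAt x
      (Matrix.toEuclideanLin A (x t) + Matrix.toEuclideanLin B (u t)) t)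
    (t : ℝ) :
    HasDerivAt
      (fun s : ℝ => (1 / 2) * ⟪x s, Matrix.toEuclideanLin (Γ s) (x s)⟫ +
        ⟪β s, x s⟫ + δ s)
      (-(q / 2) * ‖x t‖ ^ 2 - q * ⟪xbar t, Matrix.toEuclideanLin L (x t)⟫ -
        (r / 2) * ‖u t‖ ^ 2 +
        (r / 2) * ‖u t + (1 / r) •
          Matrix.toEuclideanLin Bᵀ (Matrix.toEuclideanLin (Γ t) (x t) + β t)‖ ^ 2) t := by
  set X := x t
  set U := u t
  set b := β t
  set xb := xbar t
  set G := Γ t with hGdef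
  set D : Matrix (Fin n) (Fin n) ℝ :=
    (1 / r) • (G * B * Bᵀ * G) - G * A - Aᵀ * G - q • (1 : Matrix (Fin n) (Fin n) ℝ) with hD
  set X' : EuclideanSpace ℝ (Fin n) := Matrix.toEuclideanLin A X + Matrix.toEuclideanLin B U
    with hX'
  set b' : EuclideanSpace ℝ (Fin n) :=
    Matrix.toEuclideanLin ((1 / r) • (G * B * Bᵀ) - Aᵀ) b - q • Matrix.toEuclideanLin L xb
    with hb'
  -- derivative of s ↦ Γ(s) x(s)
  have hgd : HasDerivAt (fun s => Matrix.toEuclideanLin (Γ s) (x s))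
      (Matrix.toEuclideanLin D X + Matrix.toEuclideanLin G X') t := by
    have hc : HasDerivAt (fun s => matCLM n n (Γ s)) (matCLM n n D) t :=
      (matCLM n n).hasFDerivAt.comp_hasDerivAt t (hΓ t)
    have := hc.clm_apply (hx t)
    simpa only [matCLM_apply] using this
  have h1 : HasDerivAt (fun s => ⟪x s, Matrix.toEuclideanLin (Γ s) (x s)⟫)
      (⟪X, Matrix.toEuclideanLin D X + Matrix.toEuclideanLin G X'⟫ +
        ⟪X', Matrix.toEuclideanLin G X⟫) t := (hx t).inner ℝ hgd
  have h2 : HasDerivAt (fun s => ⟪β s, x s⟫) (⟪b, X'⟫ + ⟪b', X⟫) t := (hβ t).inner ℝ (hx t)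
  have total := ((h1.const_mul ((1:ℝ)/2)).add h2).add (hδ t)
  refine total.congr_deriv ?_
  symm
  -- now the scalar identity
  set P : EuclideanSpace ℝ (Fin m) := Matrix.toEuclideanLin Bᵀ (Matrix.toEuclideanLin G X)
    with hP
  set Q : EuclideanSpace ℝ (Fin m) := Matrix.toEuclideanLin Bᵀ b with hQ
  have hBadj : ∀ (a : EuclideanSpace ℝ (Fin n)) (c : EuclideanSpace ℝ (Fin m)),
      ⟪a, Matrix.toEuclideanLin B c⟫ = ⟪Matrix.toEuclideanLin Bᵀ a, c⟫ :=
    fun a c => (adjE B a c).symm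
  have hGadj : ∀ (a w : EuclideanSpace ℝ (Fin n)),
      ⟪a, Matrix.toEuclideanLin G w⟫ = ⟪Matrix.toEuclideanLin G a, w⟫ := by
    intro a w
    have h := adjE (Γ t) a w
    rw [hΓs t] at h
    exact h.symm
  have c1 : ⟪X, Matrix.toEuclideanLin (G * B * Bᵀ * G) X⟫ = ⟪P, P⟫ := by
    simp only [mulE]; rw [hGadj, hBadj]
  have c2 : ⟪X, Matrix.toEuclideanLin (G * A) X⟫ =
      ⟪Matrix.toEuclideanLin G X, Matrix.toEuclideanLin A X⟫ := by
    simp only [mulE]; rw [hGadj]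
  have c3 : ⟪X, Matrix.toEuclideanLin (Aᵀ * G) X⟫ =
      ⟪Matrix.toEuclideanLin G X, Matrix.toEuclideanLin A X⟫ := by
    simp only [mulE]
    rw [real_inner_comm]
    exact adjE A (Matrix.toEuclideanLin G X) X
  have c4 : ⟪X, Matrix.toEuclideanLin G X'⟫ =
      ⟪Matrix.toEuclideanLin G X, Matrix.toEuclideanLin A X⟫ + ⟪P, U⟫ := by
    rw [hGadj, hX', inner_add_right, hBadj]
  have c5 : ⟪X', Matrix.toEuclideanLin G X⟫ =
      ⟪Matrix.toEuclideanLin G X, Matrix.toEuclideanLin A X⟫ + ⟪P, U⟫ := by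
    rw [real_inner_comm, hX', inner_add_right, hBadj]
  have c6 : ⟪b, X'⟫ = ⟪b, Matrix.toEuclideanLin A X⟫ + ⟪Q, U⟫ := by
    rw [hX', inner_add_right, hBadj]
  have c7a : ⟪Matrix.toEuclideanLin (G * B * Bᵀ) b, X⟫ = ⟪P, Q⟫ := by
    simp only [mulE]
    rw [real_inner_comm, hGadj, hBadj]
  have c7b := adjE A b X
  have c7c : ⟪Matrix.toEuclideanLin L xb, X⟫ = ⟪xb, Matrix.toEuclideanLin L X⟫ := by
    have h := adjE L xb X
    rwa [hL] at h
  have c7 : ⟪b', X⟫ = (1 / r) * ⟪P, Q⟫ - ⟪b, Matrix.toEuclideanLin A X⟫ -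
      q * ⟪xb, Matrix.toEuclideanLin L X⟫ := by
    rw [hb']
    simp only [map_sub, map_smul, LinearMap.sub_apply, LinearMap.smul_apply,
      inner_sub_left, real_inner_smul_left, c7a, c7b, c7c]
  have c9 : ⟪b, Matrix.toEuclideanLin (B * Bᵀ) b⟫ = ⟪Q, Q⟫ := by
    simp only [mulE]; rw [hBadj]
  have cD : Matrix.toEuclideanLin D X =
      (1 / r) • Matrix.toEuclideanLin (G * B * Bᵀ * G) X -
        Matrix.toEuclideanLin (G * A) X - Matrix.toEuclideanLin (Aᵀ * G) X - q • X := by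
    rw [hD]
    simp only [map_sub, map_smul, LinearMap.sub_apply, LinearMap.smul_apply, oneE]
  have n1 : ‖X‖ ^ 2 = ⟪X, X⟫ := (real_inner_self_eq_norm_sq X).symm
  have n2 : ‖U‖ ^ 2 = ⟪U, U⟫ := (real_inner_self_eq_norm_sq U).symm
  have n3 : ‖U + (1 / r) • Matrix.toEuclideanLin Bᵀ (Matrix.toEuclideanLin G X + b)‖ ^ 2 =
      ⟪U, U⟫ + 2 * ((1 / r) * (⟪P, U⟫ + ⟪Q, U⟫)) +
        (1 / r) * ((1 / r) * (⟪P, P⟫ + 2 * ⟪P, Q⟫ + ⟪Q, Q⟫)) := by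
    rw [← real_inner_self_eq_norm_sq, map_add, real_inner_add_add_self,
      real_inner_smul_right, real_inner_smul_left, real_inner_smul_right]
    simp only [inner_add_left, inner_add_right]
    rw [real_inner_comm Q P, real_inner_comm U P, real_inner_comm U Q]
    ring
  rw [n1, n2, n3, cD]
  simp only [inner_add_right, inner_sub_right, real_inner_smul_right]
  rw [c1, c2, c3, c4, c5, c6, c7, c9]
  have hr' : r ≠ 0 := ne_of_gt hr
  field_simp
  ring
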